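/- arXiv:2401.01320 — 4 statements merged into one kernel-verified Lean document; each statement's English description precedes it below -/
import Mathlib

section
/- Let w be a nontrivial reduced word in the free group F_n on basis {x_1, ..., x_n}. If among the letters of w there is exactly one occurrence of x_j or its inverse (for some fixed j), i.e., the total number of occurrences of x_j and x_j^{-1} in w is one, then w is primitive (w is an element of some basis of F_n). -/
/-- A subgroup `F` of a group `G` is a proper free factor if there is a nontrivial
subgroup `K` such that `G` is the internal free product of `F` and `K`. -/
def IsProperFreeFactor {G : Type*} [Group G] (F : Subgroup G) : Prop :=
  ∃ K : Subgroup G, F ≠ ⊥ ∧ K ≠ ⊥ ∧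
    Function.Bijective (Monoid.Coprod.lift F.subtype K.subtype)

/-- An element of a group is separable if it lies in a proper free factor. -/
def IsSeparableElt {G : Type*} [Group G] (w : G) : Prop :=
  ∃ F : Subgroup G, IsProperFreeFactor F ∧ w ∈ F

/-- An element of the free group `F_n` is primitive if some automorphism carries
a standard generator to it, equivalently it belongs to some basis. -/
def IsPrimitiveElt {n : ℕ} (w : FreeGroup (Fin n)) : Prop :=
  ∃ (φ : FreeGroup (Fin n) ≃* FreeGroup (Fin n)) (i : Fin n), φ (FreeGroup.of i) = w



private lemma countP_split {α : Type*} (p : α → Bool) :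
    ∀ L : List α, L.countP p = 1 →
      ∃ A x B, L = A ++ x :: B ∧ p x = true ∧ (∀ a ∈ A, p a = false) ∧ (∀ b ∈ B, p b = false)
  | [], h => by simp at h
  | y :: T, h => by
    by_cases hy : p y = true
    · refine ⟨[], y, T, by simp, hy, by simp, ?_⟩
      have : T.countP p = 0 := by
        rw [List.countP_cons_of_pos hy] at h; omega
      intro b hb
      simpa using List.countP_eq_zero.mp this b hb
    · have hy' : p y = false := by simpa using hy
      rw [List.countP_cons_of_neg] at h
      · obtain ⟨A, x, B, h1, h2, h3, h4⟩ := countP_split p T h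
        exact ⟨y :: A, x, B, by simp [h1], h2, by
          intro a ha; rcases List.mem_cons.mp ha with rfl | ha
          exacts [hy', h3 a ha], h4⟩
      · simp [hy']

private lemma mk_singleton {n : ℕ} (i : Fin n) (b : Bool) :
    FreeGroup.mk [(i, b)] = (if b then FreeGroup.of i else (FreeGroup.of i)⁻¹) := by
  cases b
  · show _ = (FreeGroup.mk [(i, true)])⁻¹
    rw [FreeGroup.inv_mk]; rfl
  · rfl

private lemma lift_fix {n : ℕ} (h : Fin n → FreeGroup (Fin n)) :
    ∀ A : List (Fin n × Bool), (∀ a ∈ A, h a.1 = FreeGroup.of a.1) →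
      FreeGroup.lift h (FreeGroup.mk A) = FreeGroup.mk A
  | [], _ => by
    have : FreeGroup.mk ([] : List (Fin n × Bool)) = 1 := rfl
    rw [this, map_one]
  | a :: A, hA => by
    have hsplit : FreeGroup.mk (a :: A) = FreeGroup.mk [a] * FreeGroup.mk A := by
      rw [FreeGroup.mul_mk]; rfl
    rw [hsplit, map_mul, lift_fix h A (fun x hx => hA x (List.mem_cons_of_mem _ hx))]
    congr 1
    obtain ⟨i, b⟩ := a
    have hi : h i = FreeGroup.of i := hA (i, b) List.mem_cons_self
    rw [mk_singleton]
    cases b <;> simp [hi]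

/-- A nontrivial reduced word with exactly one occurrence of the letter
`x_j` or its inverse is primitive. -/
theorem one_letter_implies_primitive (n : ℕ) (j : Fin n) (w : FreeGroup (Fin n))
    (hw : w ≠ 1)
    (hcount : (FreeGroup.toWord w).countP (fun p => p.1 == j) = 1) :
    IsPrimitiveElt w := by
  obtain ⟨A, x, B, hL, hx, hA, hB⟩ := countP_split _ _ hcount
  obtain ⟨i, b⟩ := x
  have hij : i = j := by simpa using hx
  subst hij
  set u := FreeGroup.mk A with hu
  set v := FreeGroup.mk B with hv
  have hwdec : w = u * FreeGroup.mk [(i, b)] * v := by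
    conv_lhs => rw [← FreeGroup.mk_toWord (x := w)]
    rw [hL, FreeGroup.mul_mk, FreeGroup.mul_mk]
    congr 1
    simp
  have hA' : ∀ a ∈ A, a.1 ≠ i := fun a ha => by simpa using hA a ha
  have hB' : ∀ a ∈ B, a.1 ≠ i := fun a ha => by simpa using hB a ha
  set f : Fin n → FreeGroup (Fin n) := fun k => if k = i then w else FreeGroup.of k with hf
  set g : Fin n → FreeGroup (Fin n) := fun k =>
    if k = i then (if b then u⁻¹ * FreeGroup.of i * v⁻¹ else v * (FreeGroup.of i)⁻¹ * u)
    else FreeGroup.of k with hg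
  have hfix : ∀ (h : Fin n → FreeGroup (Fin n)), (∀ k, k ≠ i → h k = FreeGroup.of k) →
      FreeGroup.lift h u = u ∧ FreeGroup.lift h v = v := by
    intro h hh
    exact ⟨lift_fix h A (fun a ha => hh a.1 (hA' a ha)),
      lift_fix h B (fun a ha => hh a.1 (hB' a ha))⟩
  obtain ⟨hfu, hfv⟩ := hfix f (fun k hk => by simp [hf, hk])
  obtain ⟨hgu, hgv⟩ := hfix g (fun k hk => by simp [hg, hk])
  have hfi : f i = w := by simp [hf]
  have key1 : (FreeGroup.lift g).comp (FreeGroup.lift f) = MonoidHom.id _ := by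
    apply FreeGroup.ext_hom
    intro k
    rcases eq_or_ne k i with rfl | hk
    · simp only [MonoidHom.comp_apply, MonoidHom.id_apply, FreeGroup.lift_apply_of]
      rw [hfi, hwdec, mk_singleton, map_mul, map_mul, hgu, hgv]
      cases b <;> simp [hg] <;> group
    · simp [hf, hg, hk]
  have key2 : (FreeGroup.lift f).comp (FreeGroup.lift g) = MonoidHom.id _ := by
    apply FreeGroup.ext_hom
    intro k
    rcases eq_or_ne k i with rfl | hk
    · simp only [MonoidHom.comp_apply, MonoidHom.id_apply, FreeGroup.lift_apply_of]
      have hgi : FreeGroup.lift f (g k) =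
          (if b then u⁻¹ * w * v⁻¹ else v * w⁻¹ * u) := by
        cases b <;>
          simp only [hg, if_pos rfl, Bool.false_eq_true, if_true, if_false, map_mul, map_inv,
            hfu, hfv, FreeGroup.lift_apply_of, hfi]
      rw [hgi, hwdec, mk_singleton]
      cases b <;> simp <;> group
    · simp [hf, hg, hk]
  refine ⟨MonoidHom.toMulEquiv (FreeGroup.lift f) (FreeGroup.lift g) key1 key2, i, ?_⟩
  simp [MonoidHom.toMulEquiv, hf]
end

section
/- Let n ≥ 2. Every nontrivial separable element of F_n is a product of two primitive elements of F_n. -/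
section Aux

/-- Build a `MulEquiv` out of two mutually inverse monoid homs. -/
def MulEquivOfComp {G H : Type*} [Group G] [Group H] (f : G →* H) (g : H →* G)
    (h1 : f.comp g = MonoidHom.id H) (h2 : g.comp f = MonoidHom.id G) : G ≃* H where
  toFun := f
  invFun := g
  left_inv := fun x => DFunLike.congr_fun h2 x
  right_inv := fun x => DFunLike.congr_fun h1 x
  map_mul' := f.map_mul

/-- Precomposition with a `MulEquiv` as an equivalence of hom-sets. -/
def homCongrLeft {G G' M : Type*} [Group G] [Group G'] [Group M] (e : G ≃* G') :
    (G →* M) ≃ (G' →* M) where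
  toFun f := f.comp e.symm.toMonoidHom
  invFun g := g.comp e.toMonoidHom
  left_inv f := by ext x; simp
  right_inv g := by ext x; simp

theorem prim_aux {n : ℕ} (i0 : Fin n) (w' : FreeGroup (Fin n))
    (hfix : ∀ f : FreeGroup (Fin n) →* FreeGroup (Fin n),
      (∀ j, j ≠ i0 → f (FreeGroup.of j) = FreeGroup.of j) → f w' = w') :
    IsPrimitiveElt (w' * (FreeGroup.of i0)⁻¹) := by
  classical
  set φ : FreeGroup (Fin n) →* FreeGroup (Fin n) :=
    FreeGroup.lift (fun j => if j = i0 then w' * (FreeGroup.of i0)⁻¹ else FreeGroup.of j) with hφ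
  set ψ : FreeGroup (Fin n) →* FreeGroup (Fin n) :=
    FreeGroup.lift (fun j => if j = i0 then (FreeGroup.of i0)⁻¹ * w' else FreeGroup.of j) with hψ
  have hφi : φ (FreeGroup.of i0) = w' * (FreeGroup.of i0)⁻¹ := by simp [hφ]
  have hψi : ψ (FreeGroup.of i0) = (FreeGroup.of i0)⁻¹ * w' := by simp [hψ]
  have hφw : φ w' = w' := hfix φ (fun j hj => by simp [hφ, hj])
  have hψw : ψ w' = w' := hfix ψ (fun j hj => by simp [hψ, hj])
  have h1 : φ.comp ψ = MonoidHom.id _ := by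
    apply FreeGroup.ext_hom
    intro a
    by_cases ha : a = i0
    · subst ha
      simp only [MonoidHom.comp_apply, hψi, map_mul, map_inv, hφw, hφi, MonoidHom.id_apply]
      group
    · simp [hψ, hφ, ha]
  have h2 : ψ.comp φ = MonoidHom.id _ := by
    apply FreeGroup.ext_hom
    intro a
    by_cases ha : a = i0
    · subst ha
      simp only [MonoidHom.comp_apply, hφi, map_mul, map_inv, hψw, hψi, MonoidHom.id_apply]
      group
    · simp [hψ, hφ, ha]
  exact ⟨MulEquivOfComp φ ψ h1 h2, i0, hφi⟩

theorem prim_transfer {n : ℕ} (Ψ : FreeGroup (Fin n) ≃* FreeGroup (Fin n))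
    (x : FreeGroup (Fin n)) (h : IsPrimitiveElt x) : IsPrimitiveElt (Ψ x) := by
  obtain ⟨α, i, hi⟩ := h
  exact ⟨α.trans Ψ, i, by simp [hi]⟩

end Aux

/-- Every nontrivial separable element of `F_n` (`n ≥ 2`) is a product of
two primitive elements. -/
theorem separable_is_product_of_two_primitives (n : ℕ) (hn : 2 ≤ n)
    (w : FreeGroup (Fin n)) (hw : w ≠ 1) (hsep : IsSeparableElt w) :
    ∃ p q : FreeGroup (Fin n), IsPrimitiveElt p ∧ IsPrimitiveElt q ∧ w = p * q := by
  classical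
  obtain ⟨F, ⟨K, hF, hK, hbij⟩, hwF⟩ := hsep
  let E : Monoid.Coprod F K ≃* FreeGroup (Fin n) :=
    MulEquiv.ofBijective (Monoid.Coprod.lift F.subtype K.subtype) hbij
  let A := IsFreeGroup.Generators F
  let B := IsFreeGroup.Generators K
  let eF : FreeGroup A ≃* F := IsFreeGroup.mulEquiv F
  let eK : FreeGroup B ≃* K := IsFreeGroup.mulEquiv K
  -- `B` is nonempty since `K ≠ ⊥`
  have hBne : Nonempty B := by
    by_contra h
    rw [not_nonempty_iff] at h
    apply hK
    rw [Subgroup.eq_bot_iff_forall]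
    intro k hk
    have h1 : eK.symm ⟨k, hk⟩ = (1 : FreeGroup B) := Subsingleton.elim _ _
    have h2 : (⟨k, hk⟩ : K) = 1 := by
      have := congrArg eK h1
      simpa using this
    exact congrArg Subtype.val h2
  -- cardinality: `A ⊕ B ≃ Fin n`
  let M := Multiplicative (ZMod 2)
  let c : ((A ⊕ B) → M) ≃ (Fin n → M) :=
    (Equiv.sumArrowEquivProdArrow A B M).trans <|
      (Equiv.prodCongr (FreeGroup.lift.trans (homCongrLeft eF))
        (FreeGroup.lift.trans (homCongrLeft eK))).trans <|
        (Monoid.Coprod.liftEquiv.trans ((homCongrLeft E).trans FreeGroup.lift.symm))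
  have hfinM : Finite ((A ⊕ B) → M) := Finite.of_equiv _ c.symm
  have hfinAB : Finite (A ⊕ B) := by
    have hinj : Function.Injective
        (fun x : A ⊕ B => (fun y => if y = x then Multiplicative.ofAdd (1 : ZMod 2) else 1 :
          (A ⊕ B) → M)) := by
      intro x x' hxx
      by_contra hne
      have h1 := congrFun hxx x
      simp [hne] at h1
      exact absurd h1 (by decide)
    exact Finite.of_injective _ hinj
  have hM2 : Nat.card M = 2 := by
    rw [Nat.card_congr (Multiplicative.toAdd (α := ZMod 2)), Nat.card_zmod]
  have hcard : Nat.card (A ⊕ B) = n := by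
    have h1 : Nat.card ((A ⊕ B) → M) = Nat.card (Fin n → M) := Nat.card_congr c
    have h2 : Nat.card (Fin n) = n := by simp
    rw [Nat.card_fun, Nat.card_fun, hM2, h2] at h1
    exact Nat.pow_right_injective (le_refl 2) h1
  let e : (A ⊕ B) ≃ Fin n := Finite.equivFinOfCardEq hcard
  obtain ⟨b0⟩ := hBne
  let i0 : Fin n := e (Sum.inr b0)
  -- the isomorphism `FreeGroup (A ⊕ B) ≃* Coprod (FreeGroup A) (FreeGroup B)`
  let toHom : FreeGroup (A ⊕ B) →* Monoid.Coprod (FreeGroup A) (FreeGroup B) :=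
    FreeGroup.lift (Sum.elim (fun a => Monoid.Coprod.inl (FreeGroup.of a))
      (fun b => Monoid.Coprod.inr (FreeGroup.of b)))
  let invHom : Monoid.Coprod (FreeGroup A) (FreeGroup B) →* FreeGroup (A ⊕ B) :=
    Monoid.Coprod.lift (FreeGroup.lift (fun a => FreeGroup.of (Sum.inl a)))
      (FreeGroup.lift (fun b => FreeGroup.of (Sum.inr b)))
  have hiso1 : toHom.comp invHom = MonoidHom.id _ := by
    apply Monoid.Coprod.hom_ext <;>
      · apply FreeGroup.ext_hom
        intro a
        simp [toHom, invHom]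
  have hiso2 : invHom.comp toHom = MonoidHom.id _ := by
    apply FreeGroup.ext_hom
    intro a
    cases a <;> simp [toHom, invHom]
  let iso3 : FreeGroup (A ⊕ B) ≃* Monoid.Coprod (FreeGroup A) (FreeGroup B) :=
    MulEquivOfComp toHom invHom hiso1 hiso2
  -- the congruence isomorphism on coproducts
  let cmap : Monoid.Coprod (FreeGroup A) (FreeGroup B) →* Monoid.Coprod F K :=
    Monoid.Coprod.lift (Monoid.Coprod.inl.comp eF.toMonoidHom)
      (Monoid.Coprod.inr.comp eK.toMonoidHom)
  let cmapInv : Monoid.Coprod F K →* Monoid.Coprod (FreeGroup A) (FreeGroup B) :=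
    Monoid.Coprod.lift (Monoid.Coprod.inl.comp eF.symm.toMonoidHom)
      (Monoid.Coprod.inr.comp eK.symm.toMonoidHom)
  have hcc1 : cmap.comp cmapInv = MonoidHom.id _ := by
    apply Monoid.Coprod.hom_ext <;>
      · ext x
        simp [cmap, cmapInv]
  have hcc2 : cmapInv.comp cmap = MonoidHom.id _ := by
    apply Monoid.Coprod.hom_ext <;>
      · ext x
        simp [cmap, cmapInv]
  let cc : Monoid.Coprod (FreeGroup A) (FreeGroup B) ≃* Monoid.Coprod F K :=
    MulEquivOfComp cmap cmapInv hcc1 hcc2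
  let Φtotal : FreeGroup (A ⊕ B) ≃* FreeGroup (Fin n) := iso3.trans (cc.trans E)
  let Φ : FreeGroup (Fin n) ≃* FreeGroup (Fin n) :=
    Φtotal.symm.trans (FreeGroup.freeGroupCongr e)
  -- the image of `w` under `Φ` is supported away from `i0`
  let w'' : FreeGroup A := eF.symm ⟨w, hwF⟩
  let L : FreeGroup A →* FreeGroup (Fin n) :=
    FreeGroup.lift (fun a => FreeGroup.of (e (Sum.inl a)))
  have hΦtot : Φtotal (FreeGroup.lift (fun a => FreeGroup.of (Sum.inl a)) w'') = w := by
    have hcomp : Φtotal.toMonoidHom.comp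
        (FreeGroup.lift (fun a => FreeGroup.of (Sum.inl a))) =
        F.subtype.comp eF.toMonoidHom := by
      apply FreeGroup.ext_hom
      intro a
      simp only [MonoidHom.comp_apply, MulEquiv.coe_toMonoidHom, FreeGroup.lift_apply_of]
      have hrfl : Φtotal (FreeGroup.of (Sum.inl a)) = E (cmap (toHom (FreeGroup.of (Sum.inl a)))) := rfl
      rw [hrfl]
      simp [toHom, cmap, E]
    have := DFunLike.congr_fun hcomp w''
    simp only [MonoidHom.comp_apply] at this
    rw [MulEquiv.coe_toMonoidHom] at this
    rw [this]
    show ((eF (eF.symm ⟨w, hwF⟩)) : FreeGroup (Fin n)) = w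
    simp
  have hΦw : Φ w = L w'' := by
    have hsym : Φtotal.symm w = FreeGroup.lift (fun a => FreeGroup.of (Sum.inl a)) w'' := by
      rw [MulEquiv.symm_apply_eq, hΦtot]
    show FreeGroup.freeGroupCongr e (Φtotal.symm w) = L w''
    rw [hsym]
    have hcomp : (FreeGroup.freeGroupCongr e).toMonoidHom.comp
        (FreeGroup.lift (fun a => FreeGroup.of (Sum.inl a))) = L := by
      apply FreeGroup.ext_hom
      intro a
      simp [L]
    have := DFunLike.congr_fun hcomp w''
    simpa using this
  -- `Φ w` is fixed by any endomorphism fixing the generators other than `i0`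
  have hfix : ∀ f : FreeGroup (Fin n) →* FreeGroup (Fin n),
      (∀ j, j ≠ i0 → f (FreeGroup.of j) = FreeGroup.of j) → f (Φ w) = Φ w := by
    intro f hf
    rw [hΦw]
    have hcomp : f.comp L = L := by
      apply FreeGroup.ext_hom
      intro a
      have hne : e (Sum.inl a) ≠ i0 := by
        intro hh
        exact Sum.inl_ne_inr (e.injective hh)
      simp only [MonoidHom.comp_apply]
      rw [show L (FreeGroup.of a) = FreeGroup.of (e (Sum.inl a)) by simp [L]]
      exact hf _ hne
    have := DFunLike.congr_fun hcomp w''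
    simpa using this
  have hp : IsPrimitiveElt (Φ w * (FreeGroup.of i0)⁻¹) := prim_aux i0 (Φ w) hfix
  have hq : IsPrimitiveElt (FreeGroup.of i0) := ⟨MulEquiv.refl _, i0, rfl⟩
  refine ⟨Φ.symm (Φ w * (FreeGroup.of i0)⁻¹), Φ.symm (FreeGroup.of i0),
    prim_transfer Φ.symm _ hp, prim_transfer Φ.symm _ hq, ?_⟩
  rw [← map_mul]
  rw [inv_mul_cancel_right]
  simp
end

section
/- Let n ≥ 2, let C^sep be the set of nontrivial separable elements of F_n and C^prim the set of primitive elements of F_n. Let d_sep and d_prim denote the word metrics on F_n with respect to C^sep and C^prim respectively. Then for all g, h in F_n: d_sep(g,h) ≤ d_prim(g,h) ≤ 2 · d_sep(g,h). In particular the identity map is a quasi-isometry between Cay(F_n, C^sep) and Cay(F_n, C^prim). -/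
open Monoid

namespace SepPrimAux

/-- The free group on a sum is the coproduct of the free groups. -/
noncomputable def freeGroupSumEquiv (α β : Type*) :
    FreeGroup (α ⊕ β) ≃* Monoid.Coprod (FreeGroup α) (FreeGroup β) :=
  MonoidHom.toMulEquiv
    (FreeGroup.lift (Sum.elim (fun a => Coprod.inl (FreeGroup.of a))
      (fun b => Coprod.inr (FreeGroup.of b))))
    (Coprod.lift (FreeGroup.map Sum.inl) (FreeGroup.map Sum.inr))
    (by
      apply FreeGroup.ext_hom
      intro a
      cases a <;> simp)
    (by
      apply Coprod.hom_ext <;>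
      · apply FreeGroup.ext_hom
        intro a
        simp)

@[simp] lemma freeGroupSumEquiv_symm_inl {α β : Type*} (x : FreeGroup α) :
    (freeGroupSumEquiv α β).symm (Coprod.inl x) = FreeGroup.map Sum.inl x := by
  simp [freeGroupSumEquiv]

@[simp] lemma freeGroupSumEquiv_symm_inr {α β : Type*} (x : FreeGroup β) :
    (freeGroupSumEquiv α β).symm (Coprod.inr x) = FreeGroup.map Sum.inr x := by
  simp [freeGroupSumEquiv]

/-- The automorphism of a free group inverting each generator. -/
noncomputable def invAut (α : Type*) : FreeGroup α ≃* FreeGroup α :=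
  MonoidHom.toMulEquiv
    (FreeGroup.lift fun a => (FreeGroup.of a)⁻¹)
    (FreeGroup.lift fun a => (FreeGroup.of a)⁻¹)
    (by apply FreeGroup.ext_hom; intro a; simp)
    (by apply FreeGroup.ext_hom; intro a; simp)

@[simp] lemma invAut_of {α : Type*} (a : α) :
    invAut α (FreeGroup.of a) = (FreeGroup.of a)⁻¹ := by
  simp [invAut]

/-- If `lift f g` is bijective then so is the lift of the range inclusions. -/
lemma lift_range_bijective {A B G : Type*} [Group A] [Group B] [Group G]
    (f : A →* G) (g : B →* G) (h : Function.Bijective (Coprod.lift f g)) :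
    Function.Bijective (Coprod.lift f.range.subtype g.range.subtype) := by
  have hf : Function.Injective f := by
    intro a b hab
    exact Coprod.inl_injective (h.1 (by simpa using hab))
  have hg : Function.Injective g := by
    intro a b hab
    exact Coprod.inr_injective (h.1 (by simpa using hab))
  let eA : A ≃* f.range := MulEquiv.ofBijective f.rangeRestrict
    ⟨MonoidHom.rangeRestrict_injective_iff.2 hf, f.rangeRestrict_surjective⟩
  let eB : B ≃* g.range := MulEquiv.ofBijective g.rangeRestrict
    ⟨MonoidHom.rangeRestrict_injective_iff.2 hg, g.rangeRestrict_surjective⟩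
  have key : (Coprod.lift f.range.subtype g.range.subtype).comp
      ((MulEquiv.coprodCongr eA eB : Coprod A B ≃* Coprod f.range g.range) :
        Coprod A B →* Coprod f.range g.range) = Coprod.lift f g := by
    apply Coprod.hom_ext <;>
    · ext a
      simp [MulEquiv.coprodCongr, eA, eB]
      rfl
  have : ⇑(Coprod.lift f.range.subtype g.range.subtype) =
      ⇑(Coprod.lift f g) ∘ ⇑(MulEquiv.coprodCongr eA eB).symm := by
    funext x
    have h2 := DFunLike.congr_fun key ((MulEquiv.coprodCongr eA eB).symm x)
    simp only [MonoidHom.comp_apply, MulEquiv.coe_toMonoidHom] at h2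
    conv_lhs => rw [← MulEquiv.apply_symm_apply (MulEquiv.coprodCongr eA eB) x]
    exact h2
  rw [this]
  exact h.comp (MulEquiv.coprodCongr eA eB).symm.bijective

end SepPrimAux

section Statement

/-- Word length of `g` with respect to a subset `S` of a group: the least number
of factors from `S` needed to write `g`. -/
noncomputable def wordLen {G : Type*} [Group G] (S : Set G) (g : G) : ℕ :=
  sInf {k | ∃ l : List G, l.length = k ∧ (∀ a ∈ l, a ∈ S) ∧ l.prod = g}

end Statement

namespace SepPrimAux

/-- Every primitive element is a nontrivial separable element. -/
lemma primitive_sep {n : ℕ} (hn : 2 ≤ n) {w : FreeGroup (Fin n)}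
    (hw : IsPrimitiveElt w) : IsSeparableElt w ∧ w ≠ 1 := by
  classical
  obtain ⟨φ, i, hφ⟩ := hw
  have hne : w ≠ 1 := by
    rw [← hφ, ← map_one φ]
    exact fun hh => FreeGroup.of_ne_one i (φ.injective hh)
  refine ⟨?_, hne⟩
  -- the splitting of `Fin n` at `i`
  let e' : Fin n ≃ ({j : Fin n // j = i} ⊕ {j : Fin n // ¬ j = i}) :=
    (Equiv.sumCompl (· = i)).symm
  let χ : FreeGroup (Fin n) ≃*
      Coprod (FreeGroup {j : Fin n // j = i}) (FreeGroup {j : Fin n // ¬ j = i}) :=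
    (FreeGroup.freeGroupCongr e').trans
      (freeGroupSumEquiv {j : Fin n // j = i} {j : Fin n // ¬ j = i})
  let hmap : Coprod (FreeGroup {j : Fin n // j = i}) (FreeGroup {j : Fin n // ¬ j = i}) →*
      FreeGroup (Fin n) := φ.toMonoidHom.comp χ.symm.toMonoidHom
  have hbij : Function.Bijective hmap := φ.bijective.comp χ.symm.bijective
  let f := hmap.comp Coprod.inl
  let g := hmap.comp Coprod.inr
  have hlift : Coprod.lift f g = hmap := by
    apply Coprod.hom_ext <;> rfl
  have hbij2 : Function.Bijective (Coprod.lift f.range.subtype g.range.subtype) :=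
    lift_range_bijective f g (by rw [hlift]; exact hbij)
  have hfval : ∀ s : {j : Fin n // j = i}, f (FreeGroup.of s) = φ (FreeGroup.of (s : Fin n)) := by
    intro s
    show φ (χ.symm (Coprod.inl (FreeGroup.of s))) = _
    have : χ.symm (Coprod.inl (FreeGroup.of s)) = FreeGroup.of (s : Fin n) := by
      show (FreeGroup.freeGroupCongr e').symm
        ((freeGroupSumEquiv _ _).symm (Coprod.inl (FreeGroup.of s))) = _
      simp [e']
    rw [this]
  have hgval : ∀ s : {j : Fin n // ¬ j = i}, g (FreeGroup.of s) = φ (FreeGroup.of (s : Fin n)) := by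
    intro s
    show φ (χ.symm (Coprod.inr (FreeGroup.of s))) = _
    have : χ.symm (Coprod.inr (FreeGroup.of s)) = FreeGroup.of (s : Fin n) := by
      show (FreeGroup.freeGroupCongr e').symm
        ((freeGroupSumEquiv _ _).symm (Coprod.inr (FreeGroup.of s))) = _
      simp [e']
    rw [this]
  have hwF : w ∈ f.range := ⟨FreeGroup.of ⟨i, rfl⟩, by rw [hfval]; exact hφ⟩
  refine ⟨f.range, ⟨g.range, ?_, ?_, hbij2⟩, hwF⟩
  · intro hbot
    rw [hbot] at hwF
    exact hne (Subgroup.mem_bot.1 hwF)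
  · -- pick j ≠ i
    have h2 : (1 : ℕ) < n := hn
    obtain ⟨j, hj⟩ : ∃ j : Fin n, j ≠ i := by
      rcases Decidable.eq_or_ne (⟨0, by omega⟩ : Fin n) i with h0 | h0
      · exact ⟨⟨1, by omega⟩, by rw [← h0]; simp [Fin.ext_iff]⟩
      · exact ⟨⟨0, by omega⟩, h0⟩
    intro hbot
    have : φ (FreeGroup.of j) ∈ g.range := ⟨FreeGroup.of ⟨j, hj⟩, hgval _⟩
    rw [hbot] at this
    have := Subgroup.mem_bot.1 this
    rw [← map_one φ] at this
    exact FreeGroup.of_ne_one j (φ.injective this)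

/-- Every nontrivial separable element is a product of two primitive elements. -/
lemma sep_two_prim {n : ℕ} (hn : 2 ≤ n) {w : FreeGroup (Fin n)}
    (hw : IsSeparableElt w) (hw1 : w ≠ 1) :
    ∃ p q : FreeGroup (Fin n), IsPrimitiveElt p ∧ IsPrimitiveElt q ∧ p * q = w := by
  classical
  obtain ⟨F, ⟨K, hF, hK, hbij⟩, hwF⟩ := hw
  let S := IsFreeGroup.Generators F
  let T := IsFreeGroup.Generators K
  let ε : Coprod F K ≃* FreeGroup (Fin n) := MulEquiv.ofBijective _ hbij
  let μ : FreeGroup (Fin n) ≃* FreeGroup (S ⊕ T) :=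
    ε.symm.trans ((MulEquiv.coprodCongr (IsFreeGroup.toFreeGroup F)
      (IsFreeGroup.toFreeGroup K)).trans (freeGroupSumEquiv S T).symm)
  -- `μ w` lies in the image of the left factor
  have hεinl : ε (Coprod.inl (⟨w, hwF⟩ : F)) = w :=
    Coprod.lift_apply_inl F.subtype K.subtype ⟨w, hwF⟩
  have hμw : μ w = FreeGroup.map Sum.inl (IsFreeGroup.toFreeGroup F ⟨w, hwF⟩) := by
    show (freeGroupSumEquiv S T).symm
      (MulEquiv.coprodCongr (IsFreeGroup.toFreeGroup F) (IsFreeGroup.toFreeGroup K)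
        (ε.symm w)) = _
    rw [show ε.symm w = Coprod.inl (⟨w, hwF⟩ : F) from (MulEquiv.symm_apply_eq ε).2 hεinl.symm]
    simp [MulEquiv.coprodCongr]
  set c : FreeGroup (S ⊕ T) := μ w with hc
  -- any endomorphism fixing the left generators fixes `c`
  have hfix : ∀ ρ : FreeGroup (S ⊕ T) →* FreeGroup (S ⊕ T),
      (∀ s : S, ρ (FreeGroup.of (Sum.inl s)) = FreeGroup.of (Sum.inl s)) → ρ c = c := by
    intro ρ hρ
    have hcomp : ρ.comp (FreeGroup.map Sum.inl) = FreeGroup.map Sum.inl := by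
      apply FreeGroup.ext_hom
      intro a
      simpa using hρ a
    rw [hμw]
    exact DFunLike.congr_fun hcomp _
  -- T is nonempty
  obtain ⟨k, hkne⟩ := Subgroup.ne_bot_iff_exists_ne_one.1 hK
  have hkT : (IsFreeGroup.toFreeGroup K k).toWord ≠ [] := by
    rw [ne_eq, FreeGroup.toWord_eq_nil_iff]
    intro hh
    exact hkne ((IsFreeGroup.toFreeGroup K).injective (by simpa using hh))
  obtain ⟨a, -⟩ := List.exists_mem_of_ne_nil _ hkT
  have t₀ : T := a.1
  -- transvection sending `of (inr t₀)` to `c * of (inr t₀)`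
  let τ₁ : FreeGroup (S ⊕ T) →* FreeGroup (S ⊕ T) := FreeGroup.lift
    (fun x => Sum.rec (fun s => FreeGroup.of (Sum.inl s))
      (fun t => if t = t₀ then c * FreeGroup.of (Sum.inr t) else FreeGroup.of (Sum.inr t)) x)
  let τ₂ : FreeGroup (S ⊕ T) →* FreeGroup (S ⊕ T) := FreeGroup.lift
    (fun x => Sum.rec (fun s => FreeGroup.of (Sum.inl s))
      (fun t => if t = t₀ then c⁻¹ * FreeGroup.of (Sum.inr t) else FreeGroup.of (Sum.inr t)) x)
  have hτ₁inl : ∀ s : S, τ₁ (FreeGroup.of (Sum.inl s)) = FreeGroup.of (Sum.inl s) := by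
    intro s; simp [τ₁]
  have hτ₂inl : ∀ s : S, τ₂ (FreeGroup.of (Sum.inl s)) = FreeGroup.of (Sum.inl s) := by
    intro s; simp [τ₂]
  have h21 : τ₂.comp τ₁ = MonoidHom.id _ := by
    apply FreeGroup.ext_hom
    intro x
    cases x with
    | inl s => simp [τ₁, τ₂]
    | inr t =>
      by_cases ht : t = t₀ <;>
        simp [τ₁, τ₂, ht, hfix τ₂ hτ₂inl, mul_assoc]
  have h12 : τ₁.comp τ₂ = MonoidHom.id _ := by
    apply FreeGroup.ext_hom
    intro x
    cases x with
    | inl s => simp [τ₁, τ₂]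
    | inr t =>
      by_cases ht : t = t₀ <;>
        simp [τ₁, τ₂, ht, hfix τ₁ hτ₁inl, mul_assoc]
  let τ : FreeGroup (S ⊕ T) ≃* FreeGroup (S ⊕ T) := MonoidHom.toMulEquiv τ₁ τ₂ h21 h12
  let σ : Fin n ≃ (S ⊕ T) := Equiv.ofFreeGroupEquiv μ
  let i : Fin n := σ.symm (Sum.inr t₀)
  refine ⟨μ.symm (τ₁ (FreeGroup.of (Sum.inr t₀))),
    μ.symm ((FreeGroup.of (Sum.inr t₀ : S ⊕ T))⁻¹), ?_, ?_, ?_⟩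
  · refine ⟨(FreeGroup.freeGroupCongr σ).trans (τ.trans μ.symm), i, ?_⟩
    show μ.symm (τ (FreeGroup.freeGroupCongr σ (FreeGroup.of i))) = _
    have h1 : FreeGroup.freeGroupCongr σ (FreeGroup.of i) = FreeGroup.of (Sum.inr t₀) := by
      simp [i]
    rw [h1]
    rfl
  · refine ⟨(FreeGroup.freeGroupCongr σ).trans ((invAut (S ⊕ T)).trans μ.symm), i, ?_⟩
    show μ.symm (invAut (S ⊕ T) (FreeGroup.freeGroupCongr σ (FreeGroup.of i))) = _
    have h1 : FreeGroup.freeGroupCongr σ (FreeGroup.of i) = FreeGroup.of (Sum.inr t₀) := by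
      simp [i]
    rw [h1, invAut_of]
  · rw [← map_mul]
    have hτ₁ : τ₁ (FreeGroup.of (Sum.inr t₀)) = c * FreeGroup.of (Sum.inr t₀) := by
      simp [τ₁]
    rw [hτ₁, mul_assoc, mul_inv_cancel, mul_one, hc]
    exact μ.symm_apply_apply w

/-- The inverse of a primitive element is primitive. -/
lemma primitive_inv {n : ℕ} {w : FreeGroup (Fin n)} (hw : IsPrimitiveElt w) :
    IsPrimitiveElt w⁻¹ := by
  obtain ⟨φ, i, hφ⟩ := hw
  refine ⟨(invAut (Fin n)).trans φ, i, ?_⟩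
  show φ (invAut (Fin n) (FreeGroup.of i)) = w⁻¹
  rw [invAut_of, map_inv, hφ]

/-- Every element of the free group is a product of primitive elements. -/
lemma exists_prim_list {n : ℕ} (g : FreeGroup (Fin n)) :
    ∃ l : List (FreeGroup (Fin n)), (∀ a ∈ l, IsPrimitiveElt a) ∧ l.prod = g := by
  induction g using FreeGroup.induction_on with
  | C1 => exact ⟨[], by simp, by simp⟩
  | of x => exact ⟨[FreeGroup.of x], by
      intro a ha
      simp only [List.mem_singleton] at ha
      exact ha ▸ ⟨MulEquiv.refl _, x, rfl⟩, by simp only [List.prod_singleton]⟩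
  | inv_of x _ => exact ⟨[(FreeGroup.of x)⁻¹], by
      intro a ha
      simp only [List.mem_singleton] at ha
      exact ha ▸ primitive_inv ⟨MulEquiv.refl _, x, rfl⟩, by simp only [List.prod_singleton]⟩
  | mul x y hx hy =>
      obtain ⟨lx, hlx, hlxp⟩ := hx
      obtain ⟨ly, hly, hlyp⟩ := hy
      exact ⟨lx ++ ly, by
        intro a ha
        rcases List.mem_append.1 ha with h | h
        · exact hlx a h
        · exact hly a h, by simp [hlxp, hlyp]⟩

end SepPrimAux

open SepPrimAux in
/-- The word metrics with respect to nontrivial separable elements and to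
primitive elements are bi-Lipschitz: `d_sep ≤ d_prim ≤ 2 d_sep`. -/
theorem sep_prim_quasi_isometry (n : ℕ) (hn : 2 ≤ n) (g h : FreeGroup (Fin n)) :
    wordLen {w : FreeGroup (Fin n) | IsSeparableElt w ∧ w ≠ 1} (g⁻¹ * h) ≤
        wordLen {w : FreeGroup (Fin n) | IsPrimitiveElt w} (g⁻¹ * h) ∧
      wordLen {w : FreeGroup (Fin n) | IsPrimitiveElt w} (g⁻¹ * h) ≤
        2 * wordLen {w : FreeGroup (Fin n) | IsSeparableElt w ∧ w ≠ 1} (g⁻¹ * h) := by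
  classical
  set x := g⁻¹ * h with hx
  set Dp := {k | ∃ l : List (FreeGroup (Fin n)), l.length = k ∧
    (∀ a ∈ l, a ∈ {w : FreeGroup (Fin n) | IsPrimitiveElt w}) ∧ l.prod = x} with hDp
  set Ds := {k | ∃ l : List (FreeGroup (Fin n)), l.length = k ∧
    (∀ a ∈ l, a ∈ {w : FreeGroup (Fin n) | IsSeparableElt w ∧ w ≠ 1}) ∧ l.prod = x} with hDs
  have hDpne : Dp.Nonempty := by
    obtain ⟨l, hl, hlp⟩ := exists_prim_list x
    exact ⟨l.length, l, rfl, hl, hlp⟩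
  have hsub : Dp ⊆ Ds := by
    rintro k ⟨l, hlen, hmem, hprod⟩
    exact ⟨l, hlen, fun a ha => primitive_sep hn (hmem a ha), hprod⟩
  have hDsne : Ds.Nonempty := ⟨_, hsub hDpne.choose_spec⟩
  constructor
  · -- d_sep ≤ d_prim
    exact Nat.sInf_le (hsub (Nat.sInf_mem hDpne))
  · -- d_prim ≤ 2 d_sep
    obtain ⟨l, hlen, hmem, hprod⟩ := Nat.sInf_mem hDsne
    -- replace each separable element by two primitives
    have : ∀ m : List (FreeGroup (Fin n)),
        (∀ a ∈ m, a ∈ {w : FreeGroup (Fin n) | IsSeparableElt w ∧ w ≠ 1}) →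
        ∃ m' : List (FreeGroup (Fin n)), m'.length = 2 * m.length ∧
          (∀ a ∈ m', IsPrimitiveElt a) ∧ m'.prod = m.prod := by
      intro m
      induction m with
      | nil => intro _; exact ⟨[], by simp, by simp, by simp⟩
      | cons a m ih =>
        intro hm
        obtain ⟨m', hm'len, hm'mem, hm'prod⟩ := ih (fun b hb => hm b (List.mem_cons_of_mem a hb))
        obtain ⟨ha, ha1⟩ := hm a List.mem_cons_self
        obtain ⟨p, q, hp, hq, hpq⟩ := sep_two_prim hn ha ha1
        refine ⟨p :: q :: m', by simp [hm'len]; ring, ?_, ?_⟩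
        · intro b hb
          rcases hb with _ | ⟨_, hb⟩
          · exact hp
          · rcases hb with _ | ⟨_, hb⟩
            · exact hq
            · exact hm'mem _ hb
        · simp [hm'prod, ← mul_assoc, hpq]
    obtain ⟨m', hm'len, hm'mem, hm'prod⟩ := this l hmem
    have hmem' : (2 * sInf Ds) ∈ Dp := by
      refine ⟨m', ?_, hm'mem, by rw [hm'prod, hprod]⟩
      rw [hm'len, hlen]
    exact Nat.sInf_le hmem'
end

section
/- The commutator [x, y] = x y x^{-1} y^{-1} in the free group F_2 = ⟨x, y⟩ is inseparable: it is not contained in any proper free factor of F_2. -/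
/- ### Auxiliary lemmas -/

/-- The free group on an empty type is trivial. -/
lemma FreeGroupAux.trivial_of_isEmpty {α : Type*} [IsEmpty α] (x : FreeGroup α) : x = 1 := by
  induction x using FreeGroup.induction_on with
  | C1 => rfl
  | of a => exact (IsEmpty.false a).elim
  | inv_of a _ => simp_all
  | mul a b ha hb => rw [ha, hb, one_mul]

/-- The free group on a subsingleton is commutative. -/
lemma FreeGroupAux.comm_of_subsingleton {α : Type*} [Subsingleton α] (a b : FreeGroup α) :
    a * b = b * a := by
  have hgen : ∀ u : α, ∀ c : FreeGroup α, FreeGroup.of u * c = c * FreeGroup.of u := by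
    intro u c
    have hle : Subgroup.closure (Set.range (FreeGroup.of : α → FreeGroup α)) ≤
        Subgroup.centralizer {FreeGroup.of u} := by
      rw [Subgroup.closure_le]
      rintro _ ⟨v, rfl⟩
      rw [SetLike.mem_coe, Subgroup.mem_centralizer_iff]
      rintro z hz
      rw [Set.mem_singleton_iff] at hz
      subst hz
      rw [Subsingleton.elim v u]
    have hc : c ∈ Subgroup.centralizer {FreeGroup.of u} := by
      apply hle; rw [FreeGroup.closure_range_of]; trivial
    exact Subgroup.mem_centralizer_iff.mp hc (FreeGroup.of u) rfl
  have hle : Subgroup.closure (Set.range (FreeGroup.of : α → FreeGroup α)) ≤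
      Subgroup.centralizer {b} := by
    rw [Subgroup.closure_le]
    rintro _ ⟨v, rfl⟩
    rw [SetLike.mem_coe, Subgroup.mem_centralizer_iff]
    rintro z hz
    rw [Set.mem_singleton_iff] at hz
    subst hz
    exact (hgen v z).symm
  have ha : a ∈ Subgroup.centralizer {b} := by
    apply hle; rw [FreeGroup.closure_range_of]; trivial
  exact (Subgroup.mem_centralizer_iff.mp ha b rfl).symm

/-- Three vectors in `ℤ²` admitting a dual basis are impossible. -/
lemma FreeGroupAux.no_three_indep (u : Fin 3 → (Fin 2 → ℤ))
    (lam : Fin 3 → ((Fin 2 → ℤ) →+ ℤ))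
    (h : ∀ i j, lam i (u j) = if i = j then 1 else 0) : False := by
  have hli : LinearIndependent ℤ u := by
    rw [Fintype.linearIndependent_iff]
    intro g hg i
    have := congrArg (lam i) hg
    rw [map_sum, map_zero] at this
    simp only [map_zsmul, h, smul_eq_mul] at this
    rw [Finset.sum_eq_single i] at this
    · simpa using this
    · intro j _ hj; simp [hj.symm]
    · simp
  have := hli.fintype_card_le_finrank
  rw [Module.finrank_pi] at this
  simp at this

/-- A linear functional on `ℤ²` packaged as an additive hom. -/
noncomputable def FreeGroupAux.lam0 (c : Fin 2 → ℤ) : (Fin 2 → ℤ) →+ ℤ where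
  toFun v := v 0 * c 0 + v 1 * c 1
  map_zero' := by simp
  map_add' a b := by simp; ring

/-- The abelianization map of `F₂`, concretely. -/
noncomputable def FreeGroupAux.piab : FreeGroup (Fin 2) →* Multiplicative (Fin 2 → ℤ) :=
  FreeGroup.lift (fun i => Multiplicative.ofAdd (Pi.single i (1:ℤ)))

/-- Any character of `F₂` with values in `ℤ` factors through the abelianization. -/
lemma FreeGroupAux.factor_through (ψ : FreeGroup (Fin 2) →* Multiplicative ℤ)
    (g : FreeGroup (Fin 2)) :
    ψ g = Multiplicative.ofAdd
      (lam0 (fun j => Multiplicative.toAdd (ψ (FreeGroup.of j)))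
        (Multiplicative.toAdd (piab g))) := by
  set c : Fin 2 → ℤ := fun j => Multiplicative.toAdd (ψ (FreeGroup.of j)) with hc
  let χ : Multiplicative (Fin 2 → ℤ) →* Multiplicative ℤ := AddMonoidHom.toMultiplicative (lam0 c)
  have : ψ = χ.comp piab := by
    apply FreeGroup.ext_hom
    intro a
    simp only [MonoidHom.comp_apply, piab, FreeGroup.lift_apply_of]
    show ψ (FreeGroup.of a) = Multiplicative.ofAdd (lam0 c (Pi.single a (1:ℤ)))
    fin_cases a <;> simp [lam0, hc]
  rw [this]; rfl

/-- The commutator word is nontrivial. -/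
lemma FreeGroupAux.comm_ne_one : ((FreeGroup.of 0 : FreeGroup (Fin 2)) * FreeGroup.of 1 *
      (FreeGroup.of 0)⁻¹ * (FreeGroup.of 1)⁻¹) ≠ 1 := by
  intro h
  have := congrArg (FreeGroup.lift
    (fun i : Fin 2 => if i = 0 then Equiv.swap (0:Fin 3) 1 else Equiv.swap 1 2)) h
  simp only [map_mul, map_inv, map_one, FreeGroup.lift_apply_of] at this
  norm_num at this
  exact absurd this (by decide)

open Monoid FreeGroupAux in
/-- The commutator `[x, y]` is inseparable in `F_2`. -/
theorem commutator_inseparable :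
    ¬ IsSeparableElt ((FreeGroup.of 0 : FreeGroup (Fin 2)) * FreeGroup.of 1 *
      (FreeGroup.of 0)⁻¹ * (FreeGroup.of 1)⁻¹) := by
  classical
  rintro ⟨F, ⟨K, hF, hK, hbij⟩, hw⟩
  set w : FreeGroup (Fin 2) := FreeGroup.of 0 * FreeGroup.of 1 *
      (FreeGroup.of 0)⁻¹ * (FreeGroup.of 1)⁻¹ with hwdef
  let e : Coprod F K ≃* FreeGroup (Fin 2) := MulEquiv.ofBijective _ hbij
  have he_inl : ∀ f : F, e (Coprod.inl f) = (f : FreeGroup (Fin 2)) := fun f => by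
    exact Coprod.lift_apply_inl F.subtype K.subtype f
  have he_inr : ∀ k : K, e (Coprod.inr k) = (k : FreeGroup (Fin 2)) := fun k => by
    exact Coprod.lift_apply_inr F.subtype K.subtype k
  have hsymmF : ∀ f : F, e.symm (f : FreeGroup (Fin 2)) = Coprod.inl f := fun f => by
    rw [MulEquiv.symm_apply_eq, he_inl]
  have hsymmK : ∀ k : K, e.symm (k : FreeGroup (Fin 2)) = Coprod.inr k := fun k => by
    rw [MulEquiv.symm_apply_eq, he_inr]
  -- evaluation of lifted characters
  have hcompF : ∀ (φ : F →* Multiplicative ℤ) (f : F),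
      (Coprod.lift φ (1 : K →* Multiplicative ℤ)).comp e.symm.toMonoidHom (f : FreeGroup (Fin 2))
        = φ f := fun φ f => by
    simp only [MonoidHom.comp_apply, MulEquiv.coe_toMonoidHom, hsymmF f, Coprod.lift_apply_inl]
  have hcompF1 : ∀ (φ : F →* Multiplicative ℤ) (k : K),
      (Coprod.lift φ (1 : K →* Multiplicative ℤ)).comp e.symm.toMonoidHom (k : FreeGroup (Fin 2))
        = 1 := fun φ k => by
    simp only [MonoidHom.comp_apply, MulEquiv.coe_toMonoidHom, hsymmK k, Coprod.lift_apply_inr,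
      MonoidHom.one_apply]
  have hcompK : ∀ (φ : K →* Multiplicative ℤ) (k : K),
      (Coprod.lift (1 : F →* Multiplicative ℤ) φ).comp e.symm.toMonoidHom (k : FreeGroup (Fin 2))
        = φ k := fun φ k => by
    simp only [MonoidHom.comp_apply, MulEquiv.coe_toMonoidHom, hsymmK k, Coprod.lift_apply_inr]
  have hcompK1 : ∀ (φ : K →* Multiplicative ℤ) (f : F),
      (Coprod.lift (1 : F →* Multiplicative ℤ) φ).comp e.symm.toMonoidHom (f : FreeGroup (Fin 2))
        = 1 := fun φ f => by
    simp only [MonoidHom.comp_apply, MulEquiv.coe_toMonoidHom, hsymmF f, Coprod.lift_apply_inl,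
      MonoidHom.one_apply]
  -- the generators of K are nonempty
  have hKne : Nonempty (IsFreeGroup.Generators K) := by
    by_contra hne
    rw [not_nonempty_iff] at hne
    apply hK
    rw [Subgroup.eq_bot_iff_forall]
    intro k hk
    have h1 : (⟨k, hk⟩ : K) = 1 := by
      apply (IsFreeGroup.toFreeGroup K).injective
      rw [map_one]
      exact FreeGroupAux.trivial_of_isEmpty _
    simpa using congrArg (Subgroup.subtype K) h1
  -- the generators of F form a subsingleton
  have hFsub : Subsingleton (IsFreeGroup.Generators F) := by
    by_contra hns
    rw [not_subsingleton_iff_nontrivial] at hns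
    obtain ⟨s, t, hst⟩ := hns.exists_pair_ne
    obtain ⟨t₀⟩ := hKne
    -- three characters of F₂
    set φ1 : F →* Multiplicative ℤ :=
      IsFreeGroup.lift (fun u => if u = s then Multiplicative.ofAdd (1:ℤ) else 1) with hφ1
    set φ2 : F →* Multiplicative ℤ :=
      IsFreeGroup.lift (fun u => if u = t then Multiplicative.ofAdd (1:ℤ) else 1) with hφ2
    set φ3 : K →* Multiplicative ℤ :=
      IsFreeGroup.lift (fun _ => Multiplicative.ofAdd (1:ℤ)) with hφ3
    set ψ : Fin 3 → (FreeGroup (Fin 2) →* Multiplicative ℤ) :=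
      ![(Coprod.lift φ1 1).comp e.symm.toMonoidHom,
        (Coprod.lift φ2 1).comp e.symm.toMonoidHom,
        (Coprod.lift 1 φ3).comp e.symm.toMonoidHom] with hψ
    set a : Fin 3 → FreeGroup (Fin 2) :=
      ![((IsFreeGroup.of s : F) : FreeGroup (Fin 2)),
        ((IsFreeGroup.of t : F) : FreeGroup (Fin 2)),
        ((IsFreeGroup.of t₀ : K) : FreeGroup (Fin 2))] with ha
    have hψa : ∀ i j, ψ i (a j) = if i = j then Multiplicative.ofAdd (1:ℤ) else 1 := by
      intro i j
      fin_cases i <;> fin_cases j <;>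
        simp only [hψ, ha, Fin.isValue, Matrix.cons_val_zero, Matrix.cons_val_one,
          Matrix.head_cons, Matrix.cons_val_two, Matrix.tail_cons, hcompF, hcompF1,
          hcompK, hcompK1, Fin.mk_one, Fin.zero_eta, Fin.reduceFinMk, if_true, if_false] <;>
        simp [hφ1, hφ2, hφ3, hst, hst.symm]
    exact FreeGroupAux.no_three_indep
      (fun j => Multiplicative.toAdd (piab (a j)))
      (fun i => lam0 (fun j => Multiplicative.toAdd (ψ i (FreeGroup.of j))))
      (by
        intro i j
        have h1 := FreeGroupAux.factor_through (ψ i) (a j)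
        have h2 : Multiplicative.toAdd (ψ i (a j)) =
            lam0 (fun j' => Multiplicative.toAdd (ψ i (FreeGroup.of j')))
              (Multiplicative.toAdd (piab (a j))) := by
          rw [h1]; rfl
        rw [← h2, hψa i j]
        split <;> rfl)
  -- hence F is commutative
  have hcomm : ∀ a b : F, a * b = b * a := by
    intro a b
    apply (IsFreeGroup.toFreeGroup F).injective
    rw [map_mul, map_mul]
    exact FreeGroupAux.comm_of_subsingleton _ _
  -- the retraction onto F
  let ρ : FreeGroup (Fin 2) →* F := (Coprod.lift (MonoidHom.id F) 1).comp
    (e.symm : FreeGroup (Fin 2) ≃* Coprod F K).toMonoidHom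
  have hρF : ∀ f : F, ρ (f : FreeGroup (Fin 2)) = f := fun f => by
    simp [ρ, hsymmF f]
  -- w is a commutator of two elements of F, hence trivial
  have hρw : ρ w = 1 := by
    rw [hwdef]
    simp only [map_mul, map_inv]
    rw [hcomm (ρ (FreeGroup.of 0)) (ρ (FreeGroup.of 1))]
    group
  have hw1 : (⟨w, hw⟩ : F) = 1 := (hρF ⟨w, hw⟩).symm.trans hρw
  have : w = 1 := by simpa using congrArg (Subgroup.subtype F) hw1
  exact FreeGroupAux.comm_ne_one this
end
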